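/- arXiv:2108.12400 — 7 statements merged into one kernel-verified Lean document; each statement's English description precedes it below -/
import Mathlib

section
/- Let x = (x₁,x₂), y = (y₁,y₂), z = (z₁,z₂) be three pairwise distinct points of K². Then ‖x−y‖₁ = ‖x−z‖₁ + ‖y−z‖₁ holds if and only if z shares one coordinate with x and the other one with y, i.e., if and only if (x₁ = z₁ and y₂ = z₂) or (y₁ = z₁ and x₂ = z₂). -/
/-- Lemma `oxy`: for pairwise distinct `x, y, z ∈ K²`,
`‖x−y‖₁ = ‖x−z‖₁ + ‖y−z‖₁` iff `z` shares one coordinate with `x` and the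
other with `y`. -/
theorem stmt_0 {K : Type*} [Field K] (v : K → ℝ)
    (hnonneg : ∀ a : K, 0 ≤ v a)
    (hzero : ∀ a : K, v a = 0 ↔ a = 0)
    (hmul : ∀ a b : K, v (a * b) = v a * v b)
    (hultra : ∀ a b : K, v (a + b) ≤ max (v a) (v b))
    (x y z : K × K) (hxy : x ≠ y) (hxz : x ≠ z) (hyz : y ≠ z) :
    (v (x.1 - y.1) + v (x.2 - y.2)
      = (v (x.1 - z.1) + v (x.2 - z.2)) + (v (y.1 - z.1) + v (y.2 - z.2)))
    ↔ ((x.1 = z.1 ∧ y.2 = z.2) ∨ (y.1 = z.1 ∧ x.2 = z.2)) := by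
  have h1 : v 1 = 1 := by
    have h0 : v 1 ≠ 0 := fun h => one_ne_zero ((hzero 1).1 h)
    have h2 : v 1 * v 1 = v 1 * 1 := by rw [mul_one, ← hmul, one_mul]
    exact mul_left_cancel₀ h0 h2
  have hneg : ∀ a : K, v (-a) = v a := by
    intro a
    have hm : v (-1 : K) = 1 := by
      have := hmul (-1 : K) (-1)
      rw [neg_mul_neg, one_mul, h1] at this
      nlinarith [hnonneg (-1 : K)]
    have := hmul (-1 : K) a
    rw [neg_one_mul, hm, one_mul] at this
    exact this
  have key : ∀ a b : K, (v (a + b) = v a + v b) ↔ (a = 0 ∨ b = 0) := by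
    intro a b
    constructor
    · intro h
      by_contra hc
      push_neg at hc
      have ha : 0 < v a := lt_of_le_of_ne (hnonneg a) fun h' => hc.1 ((hzero a).1 h'.symm)
      have hb : 0 < v b := lt_of_le_of_ne (hnonneg b) fun h' => hc.2 ((hzero b).1 h'.symm)
      have := hultra a b
      rw [h] at this
      rcases max_cases (v a) (v b) with ⟨e, _⟩ | ⟨e, _⟩ <;> rw [e] at this <;> linarith
    · rintro (rfl | rfl)
      · rw [zero_add, (hzero 0).2 rfl, zero_add]
      · rw [add_zero, (hzero 0).2 rfl, add_zero]
  set a := x.1 - z.1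
  set b := z.1 - y.1
  set c := x.2 - z.2
  set d := z.2 - y.2
  have e1 : x.1 - y.1 = a + b := by ring
  have e2 : x.2 - y.2 = c + d := by ring
  have e3 : y.1 - z.1 = -b := by ring
  have e4 : y.2 - z.2 = -d := by ring
  rw [e1, e2, e3, e4, hneg, hneg]
  have hab : v (a + b) ≤ v a + v b := le_trans (hultra a b)
    (max_le (by linarith [hnonneg b]) (by linarith [hnonneg a]))
  have hcd : v (c + d) ≤ v c + v d := le_trans (hultra c d)
    (max_le (by linarith [hnonneg d]) (by linarith [hnonneg c]))
  have split : (v (a + b) + v (c + d) = (v a + v c) + (v b + v d)) ↔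
      (v (a + b) = v a + v b ∧ v (c + d) = v c + v d) := by
    constructor
    · intro h; constructor <;> linarith
    · rintro ⟨h1, h2⟩; linarith
  rw [split, key, key]
  have haz : a = 0 ↔ x.1 = z.1 := sub_eq_zero
  have hbz : b = 0 ↔ z.1 = y.1 := sub_eq_zero
  have hcz : c = 0 ↔ x.2 = z.2 := sub_eq_zero
  have hdz : d = 0 ↔ z.2 = y.2 := sub_eq_zero
  rw [haz, hbz, hcz, hdz]
  constructor
  · rintro ⟨h1 | h1, h2 | h2⟩
    · exact absurd (Prod.ext h1 h2) hxz
    · exact Or.inl ⟨h1, h2.symm⟩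
    · exact Or.inr ⟨h1.symm, h2⟩
    · exact absurd (Prod.ext h1.symm h2.symm) hyz
  · rintro (⟨h1, h2⟩ | ⟨h1, h2⟩)
    · exact ⟨Or.inl h1, Or.inr h2.symm⟩
    · exact ⟨Or.inr h1.symm, Or.inl h2⟩
end

section
/- Let x = (x₁,…,xₙ), y = (y₁,…,yₙ), z = (z₁,…,zₙ) ∈ Kⁿ. Then ‖x−y‖₁ = ‖x−z‖₁ + ‖y−z‖₁ holds if and only if zᵢ ∈ {xᵢ, yᵢ} for every i = 1,…,n. -/
/-- Lemma `ndimensional`: for `x, y, z ∈ Kⁿ`,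
`‖x−y‖₁ = ‖x−z‖₁ + ‖y−z‖₁` iff `zᵢ ∈ {xᵢ, yᵢ}` for every `i`. -/
theorem stmt_2 {K : Type*} [Field K] (v : K → ℝ)
    (hnonneg : ∀ a : K, 0 ≤ v a)
    (hzero : ∀ a : K, v a = 0 ↔ a = 0)
    (hmul : ∀ a b : K, v (a * b) = v a * v b)
    (hultra : ∀ a b : K, v (a + b) ≤ max (v a) (v b))
    (n : ℕ) (x y z : Fin n → K) :
    (∑ i, v (x i - y i) = (∑ i, v (x i - z i)) + ∑ i, v (y i - z i))
    ↔ (∀ i, z i = x i ∨ z i = y i) := by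
  have hone : v 1 = 1 := by
    have h := hmul 1 1
    rw [one_mul] at h
    have h1 : v 1 ≠ 0 := fun h0 => one_ne_zero ((hzero 1).mp h0)
    have h2 : v 1 * v 1 = v 1 * 1 := by rw [mul_one]; exact h.symm
    exact mul_left_cancel₀ h1 h2
  have hneg : ∀ a : K, v (-a) = v a := by
    intro a
    have hm1 : v (-1 : K) = 1 := by
      have h := hmul (-1) (-1)
      rw [neg_mul_neg, one_mul, hone] at h
      have h2 : (v (-1 : K) - 1) * (v (-1 : K) + 1) = 0 := by nlinarith
      rcases mul_eq_zero.mp h2 with h3 | h3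
      · linarith
      · have := hnonneg (-1 : K); linarith
    have := hmul (-1) a
    rw [neg_one_mul, hm1, one_mul] at this
    exact this
  have hsub : ∀ a b : K, v (a - b) = v (b - a) := by
    intro a b; rw [← neg_sub b a, hneg]
  -- pointwise inequality
  have hle : ∀ a b c : K, v (a - b) ≤ v (a - c) + v (b - c) := by
    intro a b c
    have h1 : a - b = (a - c) + (c - b) := by ring
    have h2 := hultra (a - c) (c - b)
    rw [← h1, hsub c b] at h2
    exact h2.trans (max_le_add_of_nonneg (hnonneg _) (hnonneg _))
  -- one-dimensional lemma
  have key : ∀ a b c : K, v (a - b) = v (a - c) + v (b - c) ↔ (c = a ∨ c = b) := by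
    intro a b c
    constructor
    · intro h
      by_contra hc
      push_neg at hc
      obtain ⟨h1, h2⟩ := hc
      have p1 : 0 < v (a - c) :=
        lt_of_le_of_ne (hnonneg _) fun h' =>
          h1 (sub_eq_zero.mp ((hzero _).mp h'.symm)).symm
      have p2 : 0 < v (b - c) :=
        lt_of_le_of_ne (hnonneg _) fun h' =>
          h2 (sub_eq_zero.mp ((hzero _).mp h'.symm)).symm
      have h3 : a - b = (a - c) + (c - b) := by ring
      have h4 := hultra (a - c) (c - b)
      rw [← h3, hsub c b] at h4
      have : max (v (a - c)) (v (b - c)) < v (a - c) + v (b - c) := by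
        rcases max_cases (v (a - c)) (v (b - c)) with ⟨he, _⟩ | ⟨he, _⟩ <;> rw [he] <;> linarith
      linarith
    · rintro (rfl | rfl)
      · rw [sub_self, (hzero 0).mpr rfl, zero_add, hsub]
      · rw [sub_self, (hzero 0).mpr rfl, add_zero]
  rw [← Finset.sum_add_distrib]
  rw [Finset.sum_eq_sum_iff_of_le (fun i _ => hle (x i) (y i) (z i))]
  constructor
  · intro h i
    exact (key _ _ _).mp (h i (Finset.mem_univ i))
  · intro h i _
    exact (key _ _ _).mpr (h i)
end

section
/- Let φ : (K²,‖·‖₁) → (K²,‖·‖₁) be a bijective isometry. Then there exist (α,β) ∈ K² and bijective isometries τ₁, τ₂ : K → K of (K, |·|) such that either φ(a,b) = (α,β) + (τ₁(a), τ₂(b)) for all (a,b) ∈ K², or φ(a,b) = (α,β) + (τ₁(b), τ₂(a)) for all (a,b) ∈ K². -/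
section Aux

variable {K : Type*} [Field K]

/-- `p` and `q` differ in exactly one coordinate. -/
private def OneC {α : Type*} (p q : α × α) : Prop :=
  (p.1 = q.1 ∧ p.2 ≠ q.2) ∨ (p.2 = q.2 ∧ p.1 ≠ q.1)

private lemma v_zero (v : K → ℝ) (hzero : ∀ a : K, v a = 0 ↔ a = 0) : v (0 : K) = 0 :=
  (hzero 0).mpr rfl

private lemma v_sub_eq_zero (v : K → ℝ) (hzero : ∀ a : K, v a = 0 ↔ a = 0)
    {a b : K} (h : v (a - b) = 0) : a = b :=
  sub_eq_zero.mp ((hzero _).mp h)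

private lemma v_pos (v : K → ℝ) (hnonneg : ∀ a : K, 0 ≤ v a)
    (hzero : ∀ a : K, v a = 0 ↔ a = 0) {a b : K} (h : a ≠ b) : 0 < v (a - b) :=
  lt_of_le_of_ne (hnonneg _) (fun h0 => h (v_sub_eq_zero v hzero h0.symm))

private lemma tri (v : K → ℝ) (hnonneg : ∀ a : K, 0 ≤ v a)
    (hultra : ∀ a b : K, v (a + b) ≤ max (v a) (v b)) (a b c : K) :
    v (a - c) ≤ v (a - b) + v (b - c) := by
  have h := hultra (a - b) (b - c)
  rw [sub_add_sub_cancel] at h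
  exact h.trans (max_le (le_add_of_nonneg_right (hnonneg _)) (le_add_of_nonneg_left (hnonneg _)))

private lemma one_dim (v : K → ℝ) (hnonneg : ∀ a : K, 0 ≤ v a)
    (hzero : ∀ a : K, v a = 0 ↔ a = 0)
    (hultra : ∀ a b : K, v (a + b) ≤ max (v a) (v b)) (a x c : K)
    (h : v (a - x) + v (x - c) = v (a - c)) : x = a ∨ x = c := by
  by_contra hcon
  push_neg at hcon
  have p1 : 0 < v (a - x) := v_pos v hnonneg hzero (fun hh => hcon.1 hh.symm)
  have p2 : 0 < v (x - c) := v_pos v hnonneg hzero hcon.2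
  have hle := hultra (a - x) (x - c)
  rw [sub_add_sub_cancel] at hle
  have : max (v (a - x)) (v (x - c)) < v (a - x) + v (x - c) :=
    max_lt (by linarith) (by linarith)
  linarith

private lemma oneC_btw_iff (v : K → ℝ) (hnonneg : ∀ a : K, 0 ≤ v a)
    (hzero : ∀ a : K, v a = 0 ↔ a = 0)
    (hultra : ∀ a b : K, v (a + b) ≤ max (v a) (v b))
    {p q : K × K} (hpq : p ≠ q) :
    OneC p q ↔ ∀ r : K × K,
      (v (p.1 - r.1) + v (p.2 - r.2)) + (v (r.1 - q.1) + v (r.2 - q.2))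
        = v (p.1 - q.1) + v (p.2 - q.2) → r = p ∨ r = q := by
  constructor
  · rintro (⟨h1, h2⟩ | ⟨h2, h1⟩) r hr
    · have e1 : v (p.1 - q.1) = 0 := by rw [h1, sub_self]; exact v_zero v hzero
      have t2 : v (p.2 - q.2) ≤ v (p.2 - r.2) + v (r.2 - q.2) := tri v hnonneg hultra _ _ _
      have n1 := hnonneg (p.1 - r.1)
      have n2 := hnonneg (r.1 - q.1)
      have hA : v (p.1 - r.1) = 0 := by linarith
      have hC : v (p.2 - r.2) + v (r.2 - q.2) = v (p.2 - q.2) := by linarith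
      have hr1 : r.1 = p.1 := (v_sub_eq_zero v hzero hA).symm
      rcases one_dim v hnonneg hzero hultra p.2 r.2 q.2 hC with h | h
      · exact Or.inl (Prod.ext_iff.mpr ⟨hr1, h⟩)
      · exact Or.inr (Prod.ext_iff.mpr ⟨hr1.trans h1, h⟩)
    · have e1 : v (p.2 - q.2) = 0 := by rw [h2, sub_self]; exact v_zero v hzero
      have t2 : v (p.1 - q.1) ≤ v (p.1 - r.1) + v (r.1 - q.1) := tri v hnonneg hultra _ _ _
      have n1 := hnonneg (p.2 - r.2)
      have n2 := hnonneg (r.2 - q.2)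
      have hA : v (p.2 - r.2) = 0 := by linarith
      have hC : v (p.1 - r.1) + v (r.1 - q.1) = v (p.1 - q.1) := by linarith
      have hr2 : r.2 = p.2 := (v_sub_eq_zero v hzero hA).symm
      rcases one_dim v hnonneg hzero hultra p.1 r.1 q.1 hC with h | h
      · exact Or.inl (Prod.ext_iff.mpr ⟨h, hr2⟩)
      · exact Or.inr (Prod.ext_iff.mpr ⟨h, hr2.trans h2⟩)
  · intro hall
    by_contra hno
    have hd1 : p.1 ≠ q.1 := by
      intro h
      by_cases h2 : p.2 = q.2
      · exact hpq (Prod.ext_iff.mpr ⟨h, h2⟩)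
      · exact hno (Or.inl ⟨h, h2⟩)
    have hd2 : p.2 ≠ q.2 := by
      intro h
      exact hno (Or.inr ⟨h, hd1⟩)
    have heq : (v (p.1 - (p.1, q.2).1) + v (p.2 - (p.1, q.2).2))
        + (v ((p.1, q.2).1 - q.1) + v ((p.1, q.2).2 - q.2))
        = v (p.1 - q.1) + v (p.2 - q.2) := by
      show (v (p.1 - p.1) + v (p.2 - q.2)) + (v (p.1 - q.1) + v (q.2 - q.2)) = _
      rw [sub_self, sub_self, v_zero v hzero]
      ring
    rcases hall (p.1, q.2) heq with h | h
    · exact hd2 (show p.2 = q.2 from ((show (p.1, q.2).2 = p.2 from congrArg Prod.snd h).symm))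
    · exact hd1 (show (p.1, q.2).1 = q.1 from congrArg Prod.fst h)

private lemma oneC_transfer (v : K → ℝ) (hnonneg : ∀ a : K, 0 ≤ v a)
    (hzero : ∀ a : K, v a = 0 ↔ a = 0)
    (hultra : ∀ a b : K, v (a + b) ≤ max (v a) (v b))
    (ψ : K × K → K × K) (hbij : Function.Bijective ψ)
    (hiso : ∀ p q : K × K, v ((ψ p).1 - (ψ q).1) + v ((ψ p).2 - (ψ q).2)
      = v (p.1 - q.1) + v (p.2 - q.2))
    {p q : K × K} (hpq : p ≠ q) : OneC p q ↔ OneC (ψ p) (ψ q) := by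
  rw [oneC_btw_iff v hnonneg hzero hultra hpq,
    oneC_btw_iff v hnonneg hzero hultra (hbij.injective.ne hpq)]
  constructor
  · intro h r hr
    obtain ⟨s, rfl⟩ := hbij.surjective r
    rw [hiso p s, hiso s q, hiso p q] at hr
    rcases h s hr with h' | h'
    · exact Or.inl (congrArg ψ h')
    · exact Or.inr (congrArg ψ h')
  · intro h s hs
    have h2 := h (ψ s) (by rw [hiso p s, hiso s q, hiso p q]; exact hs)
    rcases h2 with h' | h'
    · exact Or.inl (hbij.injective h')
    · exact Or.inr (hbij.injective h')

private lemma main_case1 (v : K → ℝ)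
    (hnonneg : ∀ a : K, 0 ≤ v a)
    (hzero : ∀ a : K, v a = 0 ↔ a = 0)
    (hultra : ∀ a b : K, v (a + b) ≤ max (v a) (v b))
    (ψ : K × K → K × K) (hbij : Function.Bijective ψ)
    (hiso : ∀ p q : K × K, v ((ψ p).1 - (ψ q).1) + v ((ψ p).2 - (ψ q).2)
      = v (p.1 - q.1) + v (p.2 - q.2))
    (h0 : ψ 0 = 0) (h1 : (ψ (1, 0)).2 = 0) :
    ∃ τ₁ τ₂ : K → K, Function.Bijective τ₁ ∧ Function.Bijective τ₂ ∧
      (∀ a b : K, v (τ₁ a - τ₁ b) = v (a - b)) ∧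
      (∀ a b : K, v (τ₂ a - τ₂ b) = v (a - b)) ∧
      ∀ a b : K, ψ (a, b) = ((τ₁ a, τ₂ b) : K × K) := by
  have inj := hbij.injective
  have T : ∀ {p q : K × K}, p ≠ q → (OneC p q ↔ OneC (ψ p) (ψ q)) :=
    fun hpq => oneC_transfer v hnonneg hzero hultra ψ hbij hiso hpq
  have h00 : ψ ((0 : K), (0 : K)) = ((0 : K), (0 : K)) := h0
  have hneA : ∀ (x y z w : K), x ≠ z → ((x, y) : K × K) ≠ (z, w) :=
    fun x y z w h hh => h (congrArg Prod.fst hh)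
  have hneB : ∀ (x y z w : K), y ≠ w → ((x, y) : K × K) ≠ (z, w) :=
    fun x y z w h hh => h (congrArg Prod.snd hh)
  have h10 : ψ ((1 : K), (0 : K)) ≠ ((0 : K), (0 : K)) := by
    intro h
    exact one_ne_zero (congrArg Prod.fst (inj (h.trans h00.symm)))
  have hψ10 : (ψ ((1 : K), (0 : K))).1 ≠ 0 := by
    intro hx
    exact h10 (Prod.ext_iff.mpr ⟨hx, h1⟩)
  -- the horizontal axis is mapped into the horizontal axis
  have vaxis : ∀ a : K, (ψ (a, (0 : K))).2 = 0 := by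
    intro a
    by_cases ha : a = 0
    · rw [ha, h00]
    · have hO := (T (hneA a 0 0 0 ha)).mp (Or.inr ⟨rfl, ha⟩)
      rw [h00] at hO
      rcases hO with ⟨heq1, hne2'⟩ | ⟨h2', _⟩
      · exfalso
        by_cases ha1 : a = 1
        · rw [ha1] at hne2'; exact hne2' h1
        · have hO2 := (T (hneA a 0 1 0 ha1)).mp (Or.inr ⟨rfl, ha1⟩)
          rcases hO2 with ⟨e1, _⟩ | ⟨e2, _⟩
          · rw [heq1] at e1
            exact hψ10 e1.symm
          · exact hne2' (e2.trans h1)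
      · exact h2'
  have vaxis1 : ∀ a : K, a ≠ 0 → (ψ (a, (0 : K))).1 ≠ 0 := by
    intro a ha hx
    exact (hneA a 0 0 0 ha) (inj ((Prod.ext_iff.mpr ⟨hx, vaxis a⟩).trans h00.symm))
  -- the vertical axis is mapped into the vertical axis
  have haxis2 : ∀ b : K, (ψ ((0 : K), b)).1 = 0 := by
    intro b
    by_cases hb : b = 0
    · rw [hb, h00]
    · have hO := (T (hneB 0 b 0 0 hb)).mp (Or.inl ⟨rfl, hb⟩)
      rw [h00] at hO
      rcases hO with ⟨he1, _⟩ | ⟨h2', hn1⟩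
      · exact he1
      · exfalso
        have hneq : ((0 : K), b) ≠ ((1 : K), (0 : K)) := hneA 0 b 1 0 zero_ne_one
        by_cases hc : (ψ ((0 : K), b)).1 = (ψ ((1 : K), (0 : K))).1
        · exact hneq (inj (Prod.ext_iff.mpr ⟨hc, h2'.trans h1.symm⟩))
        · have hback := (T hneq).mpr (Or.inr ⟨h2'.trans h1.symm, hc⟩)
          rcases hback with ⟨e, _⟩ | ⟨e, _⟩
          · exact zero_ne_one e
          · exact hb e
  -- vertical lines map to vertical lines
  have col1 : ∀ a b : K, (ψ (a, b)).1 = (ψ (a, (0 : K))).1 := by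
    intro a b
    by_cases hb : b = 0
    · rw [hb]
    · have hO := (T (hneB a b a 0 hb)).mp (Or.inl ⟨rfl, hb⟩)
      rcases hO with ⟨he1, _⟩ | ⟨he2, hn1⟩
      · exact he1
      · exfalso
        by_cases ha : a = 0
        · rw [ha] at hn1
          exact hn1 ((haxis2 b).trans (congrArg Prod.fst h00).symm)
        · by_cases hx : (ψ (a, b)).1 = 0
          · exact hneA a b 0 0 ha (inj ((Prod.ext_iff.mpr
              ⟨hx, he2.trans (vaxis a)⟩).trans h00.symm))
          · have himg : OneC (ψ (a, b)) (ψ ((0 : K), (0 : K))) := by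
              refine Or.inr ⟨?_, ?_⟩
              · exact (he2.trans (vaxis a)).trans (congrArg Prod.snd h00).symm
              · intro hh
                exact hx (hh.trans (congrArg Prod.fst h00))
            rcases (T (hneA a b 0 0 ha)).mpr himg with ⟨e, _⟩ | ⟨e, _⟩
            · exact ha e
            · exact hb e
  -- horizontal lines map to horizontal lines
  have col2 : ∀ a b : K, (ψ (a, b)).2 = (ψ ((0 : K), b)).2 := by
    intro a b
    by_cases ha : a = 0
    · rw [ha]
    · have hO := (T (hneA a b 0 b ha)).mp (Or.inr ⟨rfl, ha⟩)
      rcases hO with ⟨he1, hn2⟩ | ⟨he2, _⟩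
      · exact absurd ((col1 a b).symm.trans (he1.trans (haxis2 b))) (vaxis1 a ha)
      · exact he2
  have formula : ∀ a b : K, ψ (a, b) = (((ψ (a, (0 : K))).1, (ψ ((0 : K), b)).2) : K × K) :=
    fun a b => Prod.ext_iff.mpr ⟨col1 a b, col2 a b⟩
  have hτ1 : ∀ a b : K, v ((ψ (a, (0 : K))).1 - (ψ (b, (0 : K))).1) = v (a - b) := by
    intro a b
    have h : v ((ψ (a, (0 : K))).1 - (ψ (b, (0 : K))).1)
        + v ((ψ (a, (0 : K))).2 - (ψ (b, (0 : K))).2)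
        = v (a - b) + v ((0 : K) - 0) := hiso (a, 0) (b, 0)
    rw [vaxis a, vaxis b, sub_self, v_zero v hzero] at h
    linarith
  have hτ2 : ∀ a b : K, v ((ψ ((0 : K), a)).2 - (ψ ((0 : K), b)).2) = v (a - b) := by
    intro a b
    have h : v ((ψ ((0 : K), a)).1 - (ψ ((0 : K), b)).1)
        + v ((ψ ((0 : K), a)).2 - (ψ ((0 : K), b)).2)
        = v ((0 : K) - 0) + v (a - b) := hiso (0, a) (0, b)
    rw [haxis2 a, haxis2 b, sub_self, v_zero v hzero] at h
    linarith
  refine ⟨fun a => (ψ (a, (0 : K))).1, fun b => (ψ ((0 : K), b)).2,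
    ⟨?_, ?_⟩, ⟨?_, ?_⟩, hτ1, hτ2, formula⟩
  · intro a b h
    have h' : (ψ (a, (0 : K))).1 = (ψ (b, (0 : K))).1 := h
    have hv : v (a - b) = 0 := by rw [← hτ1 a b, h', sub_self]; exact v_zero v hzero
    exact v_sub_eq_zero v hzero hv
  · intro y
    obtain ⟨p, hp⟩ := hbij.surjective (y, 0)
    have hf := formula p.1 p.2
    rw [show ((p.1, p.2) : K × K) = p from rfl, hp] at hf
    exact ⟨p.1, (congrArg Prod.fst hf).symm⟩
  · intro a b h
    have h' : (ψ ((0 : K), a)).2 = (ψ ((0 : K), b)).2 := h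
    have hv : v (a - b) = 0 := by rw [← hτ2 a b, h', sub_self]; exact v_zero v hzero
    exact v_sub_eq_zero v hzero hv
  · intro y
    obtain ⟨p, hp⟩ := hbij.surjective (0, y)
    have hf := formula p.1 p.2
    rw [show ((p.1, p.2) : K × K) = p from rfl, hp] at hf
    exact ⟨p.2, (congrArg Prod.snd hf).symm⟩

end Aux

/-- hard direction of Proposition `MU`: every bijective isometry
of `(K², ‖·‖₁)` is of the form `(a,b) ↦ (α,β) + (τ₁ a, τ₂ b)` or
`(a,b) ↦ (α,β) + (τ₁ b, τ₂ a)` for some bijective isometries `τ₁, τ₂` of `K`. -/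
theorem stmt_4 {K : Type*} [Field K] (v : K → ℝ)
    (hnonneg : ∀ a : K, 0 ≤ v a)
    (hzero : ∀ a : K, v a = 0 ↔ a = 0)
    (hmul : ∀ a b : K, v (a * b) = v a * v b)
    (hultra : ∀ a b : K, v (a + b) ≤ max (v a) (v b))
    (φ : K × K → K × K) (hbij : Function.Bijective φ)
    (hiso : ∀ p q : K × K,
      v ((φ p).1 - (φ q).1) + v ((φ p).2 - (φ q).2)
        = v (p.1 - q.1) + v (p.2 - q.2)) :
    ∃ (α β : K) (τ₁ τ₂ : K → K),
      Function.Bijective τ₁ ∧ Function.Bijective τ₂ ∧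
      (∀ a b : K, v (τ₁ a - τ₁ b) = v (a - b)) ∧
      (∀ a b : K, v (τ₂ a - τ₂ b) = v (a - b)) ∧
      ((∀ a b : K, φ (a, b) = ((α, β) : K × K) + (τ₁ a, τ₂ b)) ∨
        (∀ a b : K, φ (a, b) = ((α, β) : K × K) + (τ₁ b, τ₂ a))) := by
  classical
  have hbijψ : Function.Bijective (fun p : K × K => φ p - φ 0) := by
    have heq : (fun p : K × K => φ p - φ 0) = (fun q : K × K => q - φ 0) ∘ φ := rfl
    rw [heq]
    exact Function.Bijective.comp
      ⟨fun x y h => by simpa using h, fun y => ⟨y + φ 0, by simp⟩⟩ hbij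
  have hisoψ : ∀ p q : K × K,
      v ((φ p - φ 0).1 - (φ q - φ 0).1) + v ((φ p - φ 0).2 - (φ q - φ 0).2)
        = v (p.1 - q.1) + v (p.2 - q.2) := by
    intro p q
    have h1 : (φ p - φ 0).1 - (φ q - φ 0).1 = (φ p).1 - (φ q).1 := by
      rw [Prod.fst_sub, Prod.fst_sub]; ring
    have h2 : (φ p - φ 0).2 - (φ q - φ 0).2 = (φ p).2 - (φ q).2 := by
      rw [Prod.snd_sub, Prod.snd_sub]; ring
    rw [h1, h2]
    exact hiso p q
  have h0ψ : (fun p : K × K => φ p - φ 0) 0 = 0 := sub_self (φ 0)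
  have h0' : (fun p : K × K => φ p - φ 0) ((0 : K), (0 : K)) = ((0 : K), (0 : K)) :=
    sub_self (φ 0)
  have hne : ((1 : K), (0 : K)) ≠ (((0 : K), (0 : K)) : K × K) :=
    fun h => one_ne_zero (congrArg Prod.fst h)
  have hO := (oneC_transfer v hnonneg hzero hultra (fun p : K × K => φ p - φ 0)
    hbijψ hisoψ hne).mp (Or.inr ⟨rfl, one_ne_zero⟩)
  rcases hO with ⟨hA, _⟩ | ⟨hA, _⟩
  · -- swap case
    have hA' : ((fun p : K × K => ((φ p - φ 0).2, (φ p - φ 0).1)) ((1 : K), (0 : K))).2 = 0 :=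
      hA.trans (congrArg Prod.fst h0')
    have hbijψ' : Function.Bijective (fun p : K × K => ((φ p - φ 0).2, (φ p - φ 0).1)) := by
      have heq : (fun p : K × K => ((φ p - φ 0).2, (φ p - φ 0).1))
          = Prod.swap ∘ (fun p : K × K => φ p - φ 0) := rfl
      rw [heq]
      exact Prod.swap_bijective.comp hbijψ
    have hisoψ' : ∀ p q : K × K,
        v ((φ p - φ 0).2 - (φ q - φ 0).2) + v ((φ p - φ 0).1 - (φ q - φ 0).1)
          = v (p.1 - q.1) + v (p.2 - q.2) := fun p q => by
      rw [add_comm]; exact hisoψ p q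
    have h0ψ' : (fun p : K × K => ((φ p - φ 0).2, (φ p - φ 0).1)) 0 = 0 := by
      show ((φ 0 - φ 0).2, (φ 0 - φ 0).1) = (0 : K × K)
      rw [sub_self]
      rfl
    obtain ⟨τ₁, τ₂, hb1, hb2, hi1, hi2, hform⟩ :=
      main_case1 v hnonneg hzero hultra
        (fun p : K × K => ((φ p - φ 0).2, (φ p - φ 0).1)) hbijψ' hisoψ' h0ψ' hA'
    refine ⟨(φ 0).1, (φ 0).2, τ₂, τ₁, hb2, hb1, hi2, hi1, Or.inr ?_⟩
    intro a b
    have hf : (((φ (a, b) - φ 0).2, (φ (a, b) - φ 0).1) : K × K) = (τ₁ a, τ₂ b) :=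
      hform a b
    have h2 : (φ (a, b) - φ 0).2 = τ₁ a := congrArg Prod.fst hf
    have h1' : (φ (a, b) - φ 0).1 = τ₂ b := congrArg Prod.snd hf
    have hsub : φ (a, b) - φ 0 = ((τ₂ b, τ₁ a) : K × K) := Prod.ext_iff.mpr ⟨h1', h2⟩
    have hgoal : φ (a, b) = φ 0 + ((τ₂ b, τ₁ a) : K × K) := by rw [← hsub]; abel
    exact hgoal
  · -- direct case
    have hA' : ((fun p : K × K => φ p - φ 0) ((1 : K), (0 : K))).2 = 0 :=
      hA.trans (congrArg Prod.snd h0')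
    obtain ⟨τ₁, τ₂, hb1, hb2, hi1, hi2, hform⟩ :=
      main_case1 v hnonneg hzero hultra (fun p : K × K => φ p - φ 0) hbijψ hisoψ h0ψ hA'
    refine ⟨(φ 0).1, (φ 0).2, τ₁, τ₂, hb1, hb2, hi1, hi2, Or.inl ?_⟩
    intro a b
    have hsub : φ (a, b) - φ 0 = ((τ₁ a, τ₂ b) : K × K) := hform a b
    have hgoal : φ (a, b) = φ 0 + ((τ₁ a, τ₂ b) : K × K) := by rw [← hsub]; abel
    exact hgoal
end

section
/- Let φ : (K²,‖·‖₁) → (K²,‖·‖₁) be a bijective isometry with φ(0,0) = (0,0). Then either φ maps the set {(a,0) : a ∈ K} onto itself and {(0,b) : b ∈ K} onto itself, or φ maps {(a,0) : a ∈ K} onto {(0,b) : b ∈ K} and {(0,b) : b ∈ K} onto {(a,0) : a ∈ K}. -/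
section StmtFiveAux

variable {K : Type*} [Field K]

/-- Core lemma: if a centred bijective isometry sends `(1,0)` off the `y`-axis,
then it preserves both axes. -/
theorem stmt5_core (v : K → ℝ)
    (hnonneg : ∀ a : K, 0 ≤ v a)
    (hzero : ∀ a : K, v a = 0 ↔ a = 0)
    (hmul : ∀ a b : K, v (a * b) = v a * v b)
    (hultra : ∀ a b : K, v (a + b) ≤ max (v a) (v b))
    (φ : K × K → K × K) (hbij : Function.Bijective φ)
    (hiso : ∀ p q : K × K,
      v ((φ p).1 - (φ q).1) + v ((φ p).2 - (φ q).2)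
        = v (p.1 - q.1) + v (p.2 - q.2))
    (h0 : φ (0, 0) = (0, 0))
    (h1 : (φ ((1 : K), (0 : K))).1 ≠ 0) :
    φ '' {p : K × K | p.2 = 0} = {p : K × K | p.2 = 0} ∧
      φ '' {p : K × K | p.1 = 0} = {p : K × K | p.1 = 0} := by
  have hv0 : v 0 = 0 := (hzero 0).2 rfl
  have hv1 : v 1 = 1 := by
    have h := hmul 1 1
    rw [one_mul] at h
    have hne : v 1 ≠ 0 := fun h' => one_ne_zero ((hzero 1).1 h')
    have h' : v 1 * 1 = v 1 * v 1 := by rw [mul_one]; exact h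
    have := mul_left_cancel₀ hne h'
    linarith
  have hvneg : ∀ a : K, v (-a) = v a := by
    intro a
    have hm1 : v (-1 : K) = 1 := by
      have h : v ((-1 : K) * (-1)) = v (-1 : K) * v (-1) := hmul _ _
      rw [show ((-1 : K) * (-1)) = 1 by ring, hv1] at h
      rcases mul_self_eq_one_iff.1 h.symm with h' | h'
      · exact h'
      · have := hnonneg (-1 : K); linarith
    rw [show (-a : K) = (-1) * a by ring, hmul, hm1, one_mul]
  have hpos : ∀ a : K, a ≠ 0 → 0 < v a := by
    intro a ha
    exact (hnonneg a).lt_of_ne (fun h => ha ((hzero a).1 h.symm))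
  have hsub : ∀ a b : K, v (a - b) ≤ max (v a) (v b) := by
    intro a b
    rw [sub_eq_add_neg]
    calc v (a + -b) ≤ max (v a) (v (-b)) := hultra a (-b)
      _ = max (v a) (v b) := by rw [hvneg]
  have hdom : ∀ a b : K, v (a - b) < v a → v a ≤ v b := by
    intro a b h
    have h2 : v a ≤ max (v (a - b)) (v b) := by
      have := hultra (a - b) b
      rwa [sub_add_cancel] at this
    rcases le_max_iff.1 h2 with h' | h'
    · linarith
    · exact h'
  -- norm preservation
  have hnφ : ∀ p : K × K, v (φ p).1 + v (φ p).2 = v p.1 + v p.2 := by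
    intro p
    have h := hiso p (0, 0)
    rw [h0] at h
    simpa using h
  -- metric characterisation of the union of the axes
  have hchar : ∀ p : K × K, (p.1 = 0 ∨ p.2 = 0) ↔
      (∀ q : K × K, v (p.1 - q.1) + v (p.2 - q.2) < v p.1 + v p.2 →
        v p.1 + v p.2 ≤ v q.1 + v q.2) := by
    intro p
    constructor
    · rintro (h | h) q hq
      · rw [h, hv0, zero_sub, hvneg] at hq
        have hlt : v (p.2 - q.2) < v p.2 := by
          have := hnonneg q.1; linarith
        have := hdom p.2 q.2 hlt
        have := hnonneg q.1
        rw [h, hv0]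
        linarith
      · rw [h, hv0, zero_sub, hvneg] at hq
        have hlt : v (p.1 - q.1) < v p.1 := by
          have := hnonneg q.2; linarith
        have := hdom p.1 q.1 hlt
        have := hnonneg q.2
        rw [h, hv0]
        linarith
    · intro h
      by_contra hno
      push_neg at hno
      obtain ⟨h1', h2'⟩ := hno
      have hp1 := hpos p.1 h1'
      have hp2 := hpos p.2 h2'
      have hlt : v (p.1 - p.1) + v (p.2 - 0) < v p.1 + v p.2 := by
        rw [sub_self, hv0, sub_zero]
        linarith
      have := h (p.1, 0) hlt
      simp only [hv0] at this
      linarith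
  -- φ preserves the union of the axes
  have hA : ∀ p : K × K, (p.1 = 0 ∨ p.2 = 0) → ((φ p).1 = 0 ∨ (φ p).2 = 0) := by
    intro p hp
    rw [hchar] at hp ⊢
    intro q hq
    obtain ⟨q', rfl⟩ := hbij.2 q
    rw [hiso p q', hnφ p] at hq
    rw [hnφ p, hnφ q']
    exact hp q' hq
  have hA' : ∀ p : K × K, ((φ p).1 = 0 ∨ (φ p).2 = 0) → (p.1 = 0 ∨ p.2 = 0) := by
    intro p hp
    rw [hchar] at hp ⊢
    intro q hq
    have h2 := hp (φ q)
    rw [hiso p q, hnφ p, hnφ q] at h2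
    exact h2 hq
  -- facts about φ (1,0)
  have he2 : (φ ((1 : K), (0 : K))).2 = 0 :=
    (hA (1, 0) (Or.inr rfl)).resolve_left h1
  have hne1 : v (φ ((1 : K), (0 : K))).1 = 1 := by
    have h := hnφ (1, 0)
    rw [he2] at h
    simpa [hv0, hv1] using h
  -- φ maps the x-axis into the x-axis
  have SX : ∀ p : K × K, p.2 = 0 → (φ p).2 = 0 := by
    intro p hp
    by_cases hp1 : p.1 = 0
    · have hp0 : p = ((0 : K), (0 : K)) := Prod.ext hp1 hp
      rw [hp0, h0]
    · by_contra hc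
      have hf1 : (φ p).1 = 0 := (hA p (Or.inr hp)).resolve_right hc
      have hd := hiso p (1, 0)
      simp only [hf1, he2, hp, zero_sub, hvneg, sub_zero, hv0, add_zero,
        zero_add, hne1] at hd
      -- hd : 1 + v (φ p).2 = v (p.1 - 1)
      have hnp := hnφ p
      rw [hf1, hp, hv0, zero_add, add_zero] at hnp
      -- hnp : v (φ p).2 = v p.1
      have hmax := hsub p.1 1
      rw [hv1] at hmax
      have hposp := hpos p.1 hp1
      have hlt : max (v p.1) 1 < v p.1 + 1 :=
        max_lt (by linarith) (by linarith)
      linarith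
  -- φ maps the y-axis into the y-axis
  have SY : ∀ p : K × K, p.1 = 0 → (φ p).1 = 0 := by
    intro p hp
    by_cases hp2 : p.2 = 0
    · have hp0 : p = ((0 : K), (0 : K)) := Prod.ext hp hp2
      rw [hp0, h0]
    · by_contra hc
      have hf2 : (φ p).2 = 0 := (hA p (Or.inl hp)).resolve_left hc
      have hd := hiso p (1, 0)
      simp only [hf2, he2, hp, zero_sub, hvneg, sub_zero, sub_self, hv0, hv1,
        add_zero, zero_add] at hd
      -- hd : v ((φ p).1 - (φ (1,0)).1) = 1 + v p.2
      have hnp := hnφ p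
      rw [hf2, hp, hv0, zero_add, add_zero] at hnp
      -- hnp : v (φ p).1 = v p.2
      have hmax := hsub (φ p).1 (φ ((1 : K), (0 : K))).1
      rw [hne1, hnp] at hmax
      have hposp := hpos p.2 hp2
      have hlt : max (v p.2) 1 < v p.2 + 1 :=
        max_lt (by linarith) (by linarith)
      linarith
  constructor
  · ext x
    simp only [Set.mem_image, Set.mem_setOf_eq]
    constructor
    · rintro ⟨p, hp, rfl⟩
      exact SX p hp
    · intro hx
      obtain ⟨p, rfl⟩ := hbij.2 x
      rcases hA' p (Or.inr hx) with h | h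
      · refine ⟨(0, 0), rfl, ?_⟩
        rw [h0]
        exact (Prod.ext (SY p h) hx).symm
      · exact ⟨p, h, rfl⟩
  · ext x
    simp only [Set.mem_image, Set.mem_setOf_eq]
    constructor
    · rintro ⟨p, hp, rfl⟩
      exact SY p hp
    · intro hx
      obtain ⟨p, rfl⟩ := hbij.2 x
      rcases hA' p (Or.inl hx) with h | h
      · exact ⟨p, h, rfl⟩
      · refine ⟨(0, 0), rfl, ?_⟩
        rw [h0]
        exact (Prod.ext hx (SX p h)).symm

end StmtFiveAux

/-- a centred bijective isometry of `(K², ‖·‖₁)` either maps each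
axis onto itself, or swaps the two axes. -/
theorem stmt_5 {K : Type*} [Field K] (v : K → ℝ)
    (hnonneg : ∀ a : K, 0 ≤ v a)
    (hzero : ∀ a : K, v a = 0 ↔ a = 0)
    (hmul : ∀ a b : K, v (a * b) = v a * v b)
    (hultra : ∀ a b : K, v (a + b) ≤ max (v a) (v b))
    (φ : K × K → K × K) (hbij : Function.Bijective φ)
    (hiso : ∀ p q : K × K,
      v ((φ p).1 - (φ q).1) + v ((φ p).2 - (φ q).2)
        = v (p.1 - q.1) + v (p.2 - q.2))
    (h0 : φ (0, 0) = (0, 0)) :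
    (φ '' {p : K × K | p.2 = 0} = {p : K × K | p.2 = 0} ∧
      φ '' {p : K × K | p.1 = 0} = {p : K × K | p.1 = 0}) ∨
    (φ '' {p : K × K | p.2 = 0} = {p : K × K | p.1 = 0} ∧
      φ '' {p : K × K | p.1 = 0} = {p : K × K | p.2 = 0}) := by
  by_cases hcase : (φ ((1 : K), (0 : K))).1 = 0
  · -- swap case
    have h2 : (φ ((1 : K), (0 : K))).2 ≠ 0 := by
      intro h'
      have heq : φ ((1 : K), (0 : K)) = φ (0, 0) := by
        rw [h0]; exact Prod.ext hcase h'
      have := hbij.1 heq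
      simp at this
    set ψ : K × K → K × K := Prod.swap ∘ φ with hψ
    have hψbij : Function.Bijective ψ :=
      Prod.swap_bijective.comp hbij
    have hψiso : ∀ p q : K × K,
        v ((ψ p).1 - (ψ q).1) + v ((ψ p).2 - (ψ q).2)
          = v (p.1 - q.1) + v (p.2 - q.2) := by
      intro p q
      have h := hiso p q
      simp only [hψ, Function.comp_apply, Prod.fst_swap, Prod.snd_swap]
      linarith
    have hψ0 : ψ (0, 0) = (0, 0) := by
      rw [hψ]
      simp only [Function.comp_apply, h0]
      rfl
    have hψ1 : (ψ ((1 : K), (0 : K))).1 ≠ 0 := by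
      simpa [hψ] using h2
    obtain ⟨hX, hY⟩ := stmt5_core v hnonneg hzero hmul hultra ψ hψbij hψiso hψ0 hψ1
    have hswsw : ∀ s : Set (K × K), Prod.swap '' (Prod.swap '' s) = s := by
      intro s
      rw [Set.image_image]
      simp
    have hXsw : Prod.swap '' {p : K × K | p.2 = 0} = {p : K × K | p.1 = 0} := by
      rw [Set.image_swap_eq_preimage_swap]
      rfl
    have hYsw : Prod.swap '' {p : K × K | p.1 = 0} = {p : K × K | p.2 = 0} := by
      rw [Set.image_swap_eq_preimage_swap]
      rfl
    have hXψ : Prod.swap '' (φ '' {p : K × K | p.2 = 0}) = {p : K × K | p.2 = 0} := by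
      rw [← Set.image_comp]
      exact hX
    have hYψ : Prod.swap '' (φ '' {p : K × K | p.1 = 0}) = {p : K × K | p.1 = 0} := by
      rw [← Set.image_comp]
      exact hY
    right
    constructor
    · calc φ '' {p : K × K | p.2 = 0}
          = Prod.swap '' (Prod.swap '' (φ '' {p : K × K | p.2 = 0})) := (hswsw _).symm
        _ = Prod.swap '' {p : K × K | p.2 = 0} := by rw [hXψ]
        _ = {p : K × K | p.1 = 0} := hXsw
    · calc φ '' {p : K × K | p.1 = 0}
          = Prod.swap '' (Prod.swap '' (φ '' {p : K × K | p.1 = 0})) := (hswsw _).symm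
        _ = Prod.swap '' {p : K × K | p.1 = 0} := by rw [hYψ]
        _ = {p : K × K | p.2 = 0} := hYsw
  · exact Or.inl (stmt5_core v hnonneg hzero hmul hultra φ hbij hiso h0 hcase)
end

section
/- Let φ : (Kⁿ,‖·‖₁) → (Kⁿ,‖·‖₁) be a bijective isometry with φ(0) = 0, and let e₁,…,eₙ denote the standard basis of Kⁿ. Then there exists a permutation σ of {1,…,n} such that φ({λ eᵢ : λ ∈ K}) = {λ e_{σ(i)} : λ ∈ K} for every i = 1,…,n. -/
section Aux

variable {K : Type*} [Field K] (v : K → ℝ)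

private lemma aux_coord
    (hnonneg : ∀ a : K, 0 ≤ v a)
    (hzero : ∀ a : K, v a = 0 ↔ a = 0)
    (hultra : ∀ a b : K, v (a + b) ≤ max (v a) (v b))
    (a b : K) :
    v (a + b) ≤ v a + v b ∧ (v a + v b = v (a + b) ↔ a = 0 ∨ b = 0) := by
  have h0 : v (0 : K) = 0 := (hzero 0).2 rfl
  refine ⟨(hultra a b).trans (max_le (le_add_of_nonneg_right (hnonneg b))
    (le_add_of_nonneg_left (hnonneg a))), ?_, ?_⟩
  · intro h
    by_contra hc
    push_neg at hc
    have ha : 0 < v a := lt_of_le_of_ne (hnonneg a) (fun e => hc.1 ((hzero a).1 e.symm))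
    have hb : 0 < v b := lt_of_le_of_ne (hnonneg b) (fun e => hc.2 ((hzero b).1 e.symm))
    have : v (a + b) < v a + v b :=
      lt_of_le_of_lt (hultra a b) (max_lt (by linarith) (by linarith))
    linarith
  · rintro (rfl | rfl) <;> simp [h0]

private lemma aux_bet
    (hnonneg : ∀ a : K, 0 ≤ v a)
    (hzero : ∀ a : K, v a = 0 ↔ a = 0)
    (hultra : ∀ a b : K, v (a + b) ≤ max (v a) (v b))
    {n : ℕ} (x m y : Fin n → K) :
    ((∑ i, v (x i - m i)) + ∑ i, v (m i - y i) = ∑ i, v (x i - y i)) ↔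
      ∀ i, m i = x i ∨ m i = y i := by
  have key : ∀ i : Fin n, v (x i - y i) ≤ v (x i - m i) + v (m i - y i) ∧
      (v (x i - m i) + v (m i - y i) = v (x i - y i) ↔ m i = x i ∨ m i = y i) := by
    intro i
    have h := aux_coord v hnonneg hzero hultra (x i - m i) (m i - y i)
    have e : x i - m i + (m i - y i) = x i - y i := by ring
    rw [e] at h
    refine ⟨h.1, h.2.trans ?_⟩
    constructor
    · rintro (h1 | h1)
      · exact Or.inl (sub_eq_zero.mp h1).symm
      · exact Or.inr (sub_eq_zero.mp h1)
    · rintro (h1 | h1)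
      · exact Or.inl (by rw [h1, sub_self])
      · exact Or.inr (by rw [h1, sub_self])
  rw [← Finset.sum_add_distrib]
  constructor
  · intro h
    intro i
    have := (Finset.sum_eq_sum_iff_of_le (fun i _ => (key i).1)).mp h.symm i (Finset.mem_univ i)
    exact (key i).2.mp this.symm
  · intro h
    exact Finset.sum_congr rfl fun i _ => (key i).2.mpr (h i)

end Aux

/-- a centred bijective isometry of `(Kⁿ, ‖·‖₁)` permutes the
coordinate axes: there is a permutation `σ` with
`φ({λ eᵢ : λ ∈ K}) = {λ e_{σ i} : λ ∈ K}` for every `i`. -/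
theorem stmt_8 {K : Type*} [Field K] (v : K → ℝ)
    (hnonneg : ∀ a : K, 0 ≤ v a)
    (hzero : ∀ a : K, v a = 0 ↔ a = 0)
    (hmul : ∀ a b : K, v (a * b) = v a * v b)
    (hultra : ∀ a b : K, v (a + b) ≤ max (v a) (v b))
    (n : ℕ) (φ : (Fin n → K) → (Fin n → K)) (hbij : Function.Bijective φ)
    (hiso : ∀ x y : Fin n → K, ∑ i, v (φ x i - φ y i) = ∑ i, v (x i - y i))
    (h0 : φ 0 = 0) :
    ∃ σ : Equiv.Perm (Fin n), ∀ i : Fin n,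
      φ '' (Set.range fun l : K => l • (Pi.single i 1 : Fin n → K))
        = Set.range fun l : K => l • (Pi.single (σ i) 1 : Fin n → K) := by
  rcases Nat.eq_zero_or_pos n with rfl | hn
  · exact ⟨Equiv.refl _, fun i => i.elim0⟩
  haveI : Nonempty (Fin n) := ⟨⟨0, hn⟩⟩
  -- transport of "betweenness" (mixtures)
  have hbet' : ∀ x m y : Fin n → K,
      (∀ i, m i = x i ∨ m i = y i) ↔ (∀ i, φ m i = φ x i ∨ φ m i = φ y i) := by
    intro x m y
    rw [← aux_bet v hnonneg hzero hultra x m y,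
      ← aux_bet v hnonneg hzero hultra (φ x) (φ m) (φ y),
      hiso x m, hiso m y, hiso x y]
  -- transport of "interval has only endpoints"
  have hP : ∀ x y : Fin n → K,
      (∀ m, (∀ i, m i = x i ∨ m i = y i) → m = x ∨ m = y) ↔
        (∀ m, (∀ i, m i = φ x i ∨ m i = φ y i) → m = φ x ∨ m = φ y) := by
    intro x y
    constructor
    · intro h m' hm'
      obtain ⟨m, rfl⟩ := hbij.2 m'
      rcases h m ((hbet' x m y).mpr hm') with rfl | rfl
      · exact Or.inl rfl
      · exact Or.inr rfl
    · intro h m hm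
      rcases h (φ m) ((hbet' x m y).mp hm) with h1 | h1
      · exact Or.inl (hbij.1 h1)
      · exact Or.inr (hbij.1 h1)
  -- "differ in at most one coordinate" iff "interval has only endpoints"
  have hDP : ∀ x y : Fin n → K,
      (∃ j, ∀ k, k ≠ j → x k = y k) ↔
        (∀ m, (∀ i, m i = x i ∨ m i = y i) → m = x ∨ m = y) := by
    intro x y
    constructor
    · rintro ⟨j, hj⟩ m hm
      rcases hm j with h1 | h1
      · left; funext k
        by_cases hk : k = j
        · rw [hk, h1]
        · rcases hm k with h2 | h2
          · exact h2
          · exact h2.trans (hj k hk).symm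
      · right; funext k
        by_cases hk : k = j
        · rw [hk, h1]
        · rcases hm k with h2 | h2
          · exact h2.trans (hj k hk)
          · exact h2
    · intro h
      by_cases hxy : x = y
      · exact ⟨Classical.arbitrary (Fin n), fun k _ => by rw [hxy]⟩
      · have hex : ∃ j, x j ≠ y j := by
          by_contra hc; push_neg at hc; exact hxy (funext hc)
        obtain ⟨j, hj⟩ := hex
        refine ⟨j, fun k hk => ?_⟩
        by_contra hne
        have hm : ∀ i, Function.update y j (x j) i = x i ∨
            Function.update y j (x j) i = y i := by
          intro i
          by_cases hi : i = j
          · subst hi; left; rw [Function.update_self]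
          · right; rw [Function.update_of_ne hi]
        rcases h _ hm with h1 | h1
        · have := congrFun h1 k
          rw [Function.update_of_ne hk] at this
          exact hne this.symm
        · have := congrFun h1 j
          rw [Function.update_self] at this
          exact hj this
  -- transport of "differ in at most one coordinate"
  have hD : ∀ x y : Fin n → K,
      (∃ j, ∀ k, k ≠ j → x k = y k) ↔ (∃ j, ∀ k, k ≠ j → φ x k = φ y k) :=
    fun x y => (hDP x y).trans ((hP x y).trans (hDP (φ x) (φ y)).symm)
  -- the axis recognition lemma
  have haxis : ∀ (i : Fin n) (x w : Fin n → K), x ≠ 0 → w ≠ 0 →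
      (∃ j, ∀ k, k ≠ j → x k = 0) → (∀ j, j ≠ i → w j = 0) →
      (∃ j, ∀ k, k ≠ j → x k = w k) → ∀ m, m ≠ i → x m = 0 := by
    intro i x w hx hwne hx0 hw hxw m hm
    obtain ⟨l, hl⟩ := hx0
    have hxl : x l ≠ 0 := by
      intro h
      apply hx
      funext k
      by_cases hk : k = l
      · rw [hk, h]; rfl
      · simpa using hl k hk
    have hli : l = i := by
      by_contra hli
      obtain ⟨j', hj'⟩ := hxw
      have hlj' : l = j' := by
        by_contra h
        exact hxl ((hj' l h).trans (hw l hli))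
      have hij' : i ≠ j' := fun h => hli (hlj'.trans h.symm)
      have hwi : w i ≠ 0 := by
        intro h
        apply hwne
        funext k
        by_cases hk : k = i
        · rw [hk, h]; rfl
        · simpa using hw k hk
      exact hwi ((hj' i hij').symm.trans (hl i (fun h => hli h.symm)))
    exact hl m (fun h => hm (h.trans hli))
  -- basic facts about the basis vectors
  have he_ne : ∀ i : Fin n, (Pi.single i 1 : Fin n → K) ≠ 0 := by
    intro i h
    have := congrFun h i
    simp at this
  have hφe_ne : ∀ i : Fin n, φ (Pi.single i 1) ≠ 0 :=
    fun i h => he_ne i (hbij.1 (h.trans h0.symm))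
  have hD0 : ∀ x : Fin n → K, (∃ j, ∀ k, k ≠ j → x k = 0) →
      ∃ j, ∀ k, k ≠ j → φ x k = 0 := by
    intro x ⟨j, hj⟩
    have h1 : ∃ j, ∀ k, k ≠ j → (0 : Fin n → K) k = x k :=
      ⟨j, fun k hk => by simpa using (hj k hk).symm⟩
    obtain ⟨j', hj'⟩ := (hD 0 x).mp h1
    exact ⟨j', fun k hk => by simpa [h0] using (hj' k hk).symm⟩
  have hD0' : ∀ x : Fin n → K, (∃ j, ∀ k, k ≠ j → φ x k = 0) →
      ∃ j, ∀ k, k ≠ j → x k = 0 := by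
    intro x ⟨j, hj⟩
    have h1 : ∃ j, ∀ k, k ≠ j → φ 0 k = φ x k :=
      ⟨j, fun k hk => by simp [h0, (hj k hk).symm]⟩
    obtain ⟨j', hj'⟩ := (hD 0 x).mpr h1
    exact ⟨j', fun k hk => by simpa using (hj' k hk).symm⟩
  -- construct the permutation
  have hτ : ∀ i : Fin n, ∃ j, ∀ k, k ≠ j → φ (Pi.single i 1) k = 0 := by
    intro i
    exact hD0 _ ⟨i, fun k hk => Pi.single_eq_of_ne hk 1⟩
  set τ : Fin n → Fin n := fun i => Classical.choose (hτ i) with hτdef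
  have hτspec : ∀ i : Fin n, ∀ k, k ≠ τ i → φ (Pi.single i 1) k = 0 :=
    fun i => Classical.choose_spec (hτ i)
  have hτinj : Function.Injective τ := by
    intro i i' h
    have hD1 : ∃ j, ∀ k, k ≠ j → φ (Pi.single i 1) k = φ (Pi.single i' 1) k :=
      ⟨τ i, fun k hk => (hτspec i k hk).trans (hτspec i' k (h ▸ hk)).symm⟩
    obtain ⟨j₀, hj₀⟩ := (hD (Pi.single i 1) (Pi.single i' 1)).mpr hD1
    by_contra hii
    have hi : i = j₀ := by
      by_contra h'
      have := hj₀ i h'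
      simp [Pi.single_eq_same, Pi.single_eq_of_ne hii] at this
    have hi' : i' = j₀ := by
      by_contra h'
      have := hj₀ i' h'
      simp [Pi.single_eq_same, Pi.single_eq_of_ne (Ne.symm hii)] at this
    exact hii (hi.trans hi'.symm)
  have hτbij : Function.Bijective τ := Finite.injective_iff_bijective.mp hτinj
  refine ⟨Equiv.ofBijective τ hτbij, ?_⟩
  have hσ : ∀ i, (Equiv.ofBijective τ hτbij) i = τ i := fun _ => rfl
  -- the range of the line through eᵢ is the i-th axis
  have hrange : ∀ i : Fin n,
      (Set.range fun l : K => l • (Pi.single i 1 : Fin n → K)) =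
        {x : Fin n → K | ∀ j, j ≠ i → x j = 0} := by
    intro i
    ext x
    simp only [Set.mem_range, Set.mem_setOf_eq]
    constructor
    · rintro ⟨l, rfl⟩ j hj
      simp [Pi.single_eq_of_ne hj]
    · intro hx
      refine ⟨x i, funext fun j => ?_⟩
      by_cases hj : j = i
      · subst hj; simp
      · simp [Pi.single_eq_of_ne hj, hx j hj]
  intro i
  rw [hrange i, hrange ((Equiv.ofBijective τ hτbij) i), hσ i]
  ext y
  simp only [Set.mem_image, Set.mem_setOf_eq]
  constructor
  · rintro ⟨x, hx, rfl⟩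
    by_cases hx0 : x = 0
    · subst hx0; rw [h0]; intro j _; rfl
    · have hφx0 : φ x ≠ 0 := fun h => hx0 (hbij.1 (h.trans h0.symm))
      exact haxis (τ i) (φ x) (φ (Pi.single i 1)) hφx0 (hφe_ne i)
        (hD0 x ⟨i, hx⟩) (hτspec i)
        ((hD x (Pi.single i 1)).mp
          ⟨i, fun k hk => by rw [hx k hk, Pi.single_eq_of_ne hk]⟩)
  · intro hy
    obtain ⟨x, rfl⟩ := hbij.2 y
    refine ⟨x, ?_, rfl⟩
    by_cases hx0 : x = 0
    · subst hx0; intro j _; rfl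
    · exact haxis i x (Pi.single i 1) hx0 (he_ne i)
        (hD0' x ⟨τ i, hy⟩)
        (fun j hj => Pi.single_eq_of_ne hj 1)
        ((hD x (Pi.single i 1)).mpr
          ⟨τ i, fun k hk => (hy k hk).trans (hτspec i k hk).symm⟩)
end

section
/- Let φ : (Kⁿ,‖·‖₁) → (Kⁿ,‖·‖₁) be a bijective isometry with φ(0) = 0. Then for every x ∈ Kⁿ, the number of nonzero coordinates of φ(x) equals the number of nonzero coordinates of x. -/
/-- a centred bijective isometry of `(Kⁿ, ‖·‖₁)` preserves the
number of nonzero coordinates of each vector. -/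
theorem stmt_9 {K : Type*} [Field K] (v : K → ℝ)
    (hnonneg : ∀ a : K, 0 ≤ v a)
    (hzero : ∀ a : K, v a = 0 ↔ a = 0)
    (hmul : ∀ a b : K, v (a * b) = v a * v b)
    (hultra : ∀ a b : K, v (a + b) ≤ max (v a) (v b))
    (n : ℕ) (φ : (Fin n → K) → (Fin n → K)) (hbij : Function.Bijective φ)
    (hiso : ∀ x y : Fin n → K, ∑ i, v (φ x i - φ y i) = ∑ i, v (x i - y i))
    (h0 : φ 0 = 0) :
    ∀ x : Fin n → K,
      Set.ncard {i : Fin n | φ x i ≠ 0} = Set.ncard {i : Fin n | x i ≠ 0} := by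
  classical
  have hv0 : v 0 = 0 := (hzero 0).2 rfl
  set d : (Fin n → K) → (Fin n → K) → ℝ := fun a b => ∑ i, v (a i - b i) with hd
  -- characterization of the metric interval [0, z]
  have key : ∀ z y : Fin n → K,
      (d 0 y + d y z = d 0 z) ↔ ∀ i, y i = 0 ∨ y i = z i := by
    intro z y
    have hle : ∀ i : Fin n, v ((0 : Fin n → K) i - z i) ≤
        v ((0 : Fin n → K) i - y i) + v (y i - z i) := by
      intro i
      have hrw : (0 : Fin n → K) i - z i = ((0 : Fin n → K) i - y i) + (y i - z i) := by
        simp only [Pi.zero_apply]; ring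
      rw [hrw]
      have h1 := hnonneg ((0 : Fin n → K) i - y i)
      have h2 := hnonneg (y i - z i)
      have h3 := hultra ((0 : Fin n → K) i - y i) (y i - z i)
      rcases max_cases (v ((0 : Fin n → K) i - y i)) (v (y i - z i)) with ⟨hm, _⟩ | ⟨hm, _⟩ <;>
        linarith
    constructor
    · intro h
      have hsum : ∑ i, (v ((0 : Fin n → K) i - y i) + v (y i - z i))
          = ∑ i, v ((0 : Fin n → K) i - z i) := by
        rw [Finset.sum_add_distrib]; exact h
      have hpt : ∀ i : Fin n, v ((0 : Fin n → K) i - y i) + v (y i - z i)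
          = v ((0 : Fin n → K) i - z i) := by
        intro i
        by_contra hne
        have hlt : v ((0 : Fin n → K) i - z i)
            < v ((0 : Fin n → K) i - y i) + v (y i - z i) :=
          lt_of_le_of_ne (hle i) (Ne.symm hne)
        have hslt : ∑ j, v ((0 : Fin n → K) j - z j)
            < ∑ j, (v ((0 : Fin n → K) j - y j) + v (y j - z j)) :=
          Finset.sum_lt_sum (fun j _ => hle j) ⟨i, Finset.mem_univ i, hlt⟩
        linarith
      intro i
      have hi := hpt i
      have hmax : v ((0 : Fin n → K) i - z i)
          ≤ max (v ((0 : Fin n → K) i - y i)) (v (y i - z i)) := by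
        have hrw : (0 : Fin n → K) i - z i = ((0 : Fin n → K) i - y i) + (y i - z i) := by
          simp only [Pi.zero_apply]; ring
        rw [hrw]; exact hultra _ _
      have h1 := hnonneg ((0 : Fin n → K) i - y i)
      have h2 := hnonneg (y i - z i)
      rcases max_cases (v ((0 : Fin n → K) i - y i)) (v (y i - z i)) with ⟨hm, _⟩ | ⟨hm, _⟩
      · -- max is first term, so second term = 0
        have : v (y i - z i) = 0 := by linarith
        right
        have := (hzero _).1 this
        exact sub_eq_zero.mp this
      · have : v ((0 : Fin n → K) i - y i) = 0 := by linarith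
        left
        have h' := (hzero _).1 this
        have : (0 : K) - y i = 0 := by simpa using h'
        simpa [eq_comm] using sub_eq_zero.mp this
    · intro h
      have hpt : ∀ i ∈ Finset.univ, v ((0 : Fin n → K) i - y i) + v (y i - z i)
          = v ((0 : Fin n → K) i - z i) := by
        intro i _
        rcases h i with h' | h' <;> simp [h', hv0]
      calc (∑ i, v ((0 : Fin n → K) i - y i)) + ∑ i, v (y i - z i)
          = ∑ i, (v ((0 : Fin n → K) i - y i) + v (y i - z i)) :=
            (Finset.sum_add_distrib).symm
        _ = ∑ i, v ((0 : Fin n → K) i - z i) := Finset.sum_congr rfl hpt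
  -- cardinality of the interval
  have card_interval : ∀ z : Fin n → K,
      Set.ncard {y : Fin n → K | ∀ i, y i = 0 ∨ y i = z i}
        = 2 ^ Set.ncard {i : Fin n | z i ≠ 0} := by
    intro z
    set T : Finset (Fin n) := Finset.univ.filter (fun i => z i ≠ 0) with hT
    have hTcard : Set.ncard {i : Fin n | z i ≠ 0} = T.card := by
      rw [← Set.ncard_coe_finset]
      congr 1
      ext i; simp [hT]
    let e : {S : Finset (Fin n) // S ⊆ T} → (Fin n → K) :=
      fun S i => if i ∈ S.1 then z i else 0
    have he_inj : Function.Injective e := by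
      intro S S' hSS
      have key' : ∀ (A B : {S : Finset (Fin n) // S ⊆ T}), e A = e B →
          ∀ i, i ∈ A.1 → i ∈ B.1 := by
        intro A B hAB i hiA
        have hiT := A.2 hiA
        have hzi : z i ≠ 0 := by
          simpa [hT] using hiT
        by_contra hiB
        have := congrFun hAB i
        simp [e, hiA, hiB] at this
        exact hzi this
      apply Subtype.ext
      apply Finset.Subset.antisymm
      · intro i hi; exact key' S S' hSS i hi
      · intro i hi; exact key' S' S hSS.symm i hi
    have he_range : Set.range e = {y : Fin n → K | ∀ i, y i = 0 ∨ y i = z i} := by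
      ext y
      constructor
      · rintro ⟨S, rfl⟩ i
        by_cases hi : i ∈ S.1 <;> simp [e, hi]
      · intro hy
        refine ⟨⟨Finset.univ.filter (fun i => y i ≠ 0), ?_⟩, ?_⟩
        · intro i hi
          simp only [Finset.mem_filter, Finset.mem_univ, true_and] at hi
          rcases hy i with h' | h'
          · exact absurd h' hi
          · simp [hT, h' ▸ hi]
        · funext i
          by_cases hi : y i = 0
          · simp [e, hi]
          · rcases hy i with h' | h'
            · exact absurd h' hi
            · have hz : z i ≠ 0 := h' ▸ hi
              simp [e, hi, h', hz]
    have hcard2 : Nat.card {S : Finset (Fin n) // S ⊆ T} = 2 ^ T.card := by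
      rw [Nat.card_eq_fintype_card, ← Finset.card_powerset, ← Fintype.card_coe]
      exact Fintype.card_congr
        (Equiv.subtypeEquivRight (fun S => (Finset.mem_powerset).symm))
    rw [← he_range, hTcard, ← hcard2]
    rw [Set.ncard_eq_toFinset_card']
    rw [Set.toFinset_range]
    rw [Finset.card_image_of_injective _ he_inj]
    simp [Nat.card_eq_fintype_card, Fintype.card_coe]
  -- distances are preserved
  have hdist : ∀ a b, d (φ a) (φ b) = d a b := hiso
  have hd0 : ∀ a, d 0 (φ a) = d 0 a := by
    intro a
    calc d 0 (φ a) = d (φ 0) (φ a) := by rw [h0]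
      _ = d 0 a := hdist 0 a
  intro x
  -- φ maps the interval [0,x] bijectively onto [0, φ x]
  have hBij : Set.BijOn φ {y | d 0 y + d y x = d 0 x} {y | d 0 y + d y (φ x) = d 0 (φ x)} := by
    refine ⟨?_, fun a _ b _ hab => hbij.injective hab, ?_⟩
    · intro y hy
      simp only [Set.mem_setOf_eq] at hy ⊢
      rw [hd0 y, hdist y x, hd0 x]
      exact hy
    · intro y' hy'
      obtain ⟨y, rfl⟩ := hbij.surjective y'
      refine ⟨y, ?_, rfl⟩
      simp only [Set.mem_setOf_eq] at hy' ⊢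
      rw [hd0 y, hdist y x, hd0 x] at hy'
      exact hy'
  have hcard_eq : Set.ncard {y | d 0 y + d y x = d 0 x}
      = Set.ncard {y | d 0 y + d y (φ x) = d 0 (φ x)} := by
    rw [← hBij.image_eq, Set.ncard_image_of_injOn hBij.injOn]
  have h1 : {y | d 0 y + d y x = d 0 x} = {y : Fin n → K | ∀ i, y i = 0 ∨ y i = x i} := by
    ext y; exact key x y
  have h2 : {y | d 0 y + d y (φ x) = d 0 (φ x)}
      = {y : Fin n → K | ∀ i, y i = 0 ∨ y i = φ x i} := by
    ext y; exact key (φ x) y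
  rw [h1, h2, card_interval, card_interval] at hcard_eq
  exact (Nat.pow_right_injective (le_refl 2) hcard_eq).symm
end

section
/- Let a = (a₁,a₂), c = (c₁,c₂) ∈ K² with |a₁ − c₁| ≠ |a₂ − c₂|. If b, b' ∈ K² satisfy ‖c − a‖₁ = ‖c − b‖₁ + ‖b − a‖₁ and ‖c − a‖₁ = ‖c − b'‖₁ + ‖b' − a‖₁, together with ‖c − b‖₁ = ‖c − b'‖₁ and ‖b − a‖₁ = ‖b' − a‖₁, then b = b'. -/
/-- if `|a₁ − c₁| ≠ |a₂ − c₂|`, then a point `b` lying "metrically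
between" `a` and `c` is uniquely determined by the distances `‖c − b‖₁` and
`‖b − a‖₁`. -/
theorem stmt_10 {K : Type*} [Field K] (v : K → ℝ)
    (hnonneg : ∀ a : K, 0 ≤ v a)
    (hzero : ∀ a : K, v a = 0 ↔ a = 0)
    (hmul : ∀ a b : K, v (a * b) = v a * v b)
    (hultra : ∀ a b : K, v (a + b) ≤ max (v a) (v b))
    (a c : K × K) (hne : v (a.1 - c.1) ≠ v (a.2 - c.2))
    (b b' : K × K)
    (hb : v (c.1 - a.1) + v (c.2 - a.2)
      = (v (c.1 - b.1) + v (c.2 - b.2)) + (v (b.1 - a.1) + v (b.2 - a.2)))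
    (hb' : v (c.1 - a.1) + v (c.2 - a.2)
      = (v (c.1 - b'.1) + v (c.2 - b'.2)) + (v (b'.1 - a.1) + v (b'.2 - a.2)))
    (hcb : v (c.1 - b.1) + v (c.2 - b.2) = v (c.1 - b'.1) + v (c.2 - b'.2))
    (hba : v (b.1 - a.1) + v (b.2 - a.2) = v (b'.1 - a.1) + v (b'.2 - a.2)) :
    b = b' := by
  have v0 : v 0 = 0 := (hzero 0).mpr rfl
  have v1 : v 1 = 1 := by
    have h := hmul 1 1
    have h1 : v 1 ≠ 0 := fun h' => one_ne_zero ((hzero 1).mp h')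
    rw [one_mul] at h
    have : v 1 * v 1 = v 1 * 1 := by rw [mul_one, ← h]
    exact (mul_left_cancel₀ h1 this)
  have vm1 : v (-1 : K) = 1 := by
    have h := hmul (-1 : K) (-1)
    rw [neg_mul_neg, one_mul, v1] at h
    nlinarith [hnonneg (-1 : K), sq_nonneg (v (-1 : K) - 1)]
  have vneg : ∀ x : K, v (-x) = v x := by
    intro x
    have h := hmul (-1 : K) x
    rw [vm1, one_mul, neg_one_mul] at h
    exact h
  have vsub : ∀ x y : K, v (x - y) = v (y - x) := by
    intro x y
    rw [← vneg (x - y), neg_sub]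
  have tri : ∀ x y : K, v (x + y) ≤ v x + v y := fun x y =>
    (hultra x y).trans (max_le (by linarith [hnonneg y]) (by linarith [hnonneg x]))
  have coord : ∀ x y : K, v (x + y) = v x + v y → x = 0 ∨ y = 0 := by
    intro x y h
    rcases le_total (v x) (v y) with hle | hle
    · left; rw [← hzero]
      have h2 := hultra x y
      rw [h, max_eq_right hle] at h2
      linarith [hnonneg x]
    · right; rw [← hzero]
      have h2 := hultra x y
      rw [h, max_eq_left hle] at h2
      linarith [hnonneg y]
  obtain ⟨a1, a2⟩ := a; obtain ⟨c1, c2⟩ := c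
  obtain ⟨b1, b2⟩ := b; obtain ⟨b1', b2'⟩ := b'
  simp only at hb hb' hcb hba hne ⊢
  rw [vsub a1 c1, vsub a2 c2] at hne
  have key : ∀ x1 x2 : K,
      v (c1 - a1) + v (c2 - a2)
        = (v (c1 - x1) + v (c2 - x2)) + (v (x1 - a1) + v (x2 - a2)) →
      (x1 = c1 ∨ x1 = a1) ∧ (x2 = c2 ∨ x2 = a2) := by
    intro x1 x2 h
    have t1 : v (c1 - a1) ≤ v (c1 - x1) + v (x1 - a1) := by
      have := tri (c1 - x1) (x1 - a1)
      rwa [sub_add_sub_cancel] at this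
    have t2 : v (c2 - a2) ≤ v (c2 - x2) + v (x2 - a2) := by
      have := tri (c2 - x2) (x2 - a2)
      rwa [sub_add_sub_cancel] at this
    have e1 : v ((c1 - x1) + (x1 - a1)) = v (c1 - x1) + v (x1 - a1) := by
      rw [sub_add_sub_cancel]; linarith
    have e2 : v ((c2 - x2) + (x2 - a2)) = v (c2 - x2) + v (x2 - a2) := by
      rw [sub_add_sub_cancel]; linarith
    refine ⟨?_, ?_⟩
    · rcases coord _ _ e1 with h' | h'
      · left; exact (sub_eq_zero.mp h').symm
      · right; exact sub_eq_zero.mp h'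
    · rcases coord _ _ e2 with h' | h'
      · left; exact (sub_eq_zero.mp h').symm
      · right; exact sub_eq_zero.mp h'
  obtain ⟨hb1, hb2⟩ := key b1 b2 hb
  obtain ⟨hb1', hb2'⟩ := key b1' b2' hb'
  have h1 : v (c1 - a1) = 0 → c1 = a1 := fun h => sub_eq_zero.mp ((hzero _).mp h)
  have h2 : v (c2 - a2) = 0 → c2 = a2 := fun h => sub_eq_zero.mp ((hzero _).mp h)
  have d1 := hnonneg (c1 - a1)
  have d2 := hnonneg (c2 - a2)
  rcases hb1 with rfl | rfl <;> rcases hb2 with rfl | rfl <;>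
    rcases hb1' with rfl | rfl <;> rcases hb2' with rfl | rfl <;>
    simp only [sub_self, v0, zero_add, add_zero, Prod.mk.injEq] at hcb hba ⊢ <;>
    first
      | rfl
      | trivial
      | exact absurd (by linarith) hne
      | (constructor <;>
          first
            | rfl
            | trivial
            | exact h1 (by linarith)
            | exact (h1 (by linarith)).symm
            | exact h2 (by linarith)
            | exact (h2 (by linarith)).symm)
end
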